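/- Let $M \ge 1$ be an integer, $\delta > 0$, and let $W \in \mathbb{R}^M$ and $\lambda \in \mathbb{R}^M$ satisfy $\lambda_m \ge \delta$ for all $m$. Then $\Big(\min_{1\le m \le M} W_m\Big)\Big(\sum_{m=1}^M \lambda_m\Big) - \langle \lambda, W \rangle \le -\delta\, \|W_\perp\|$, where $W_\perp := W - ((1/M)\sum_{m=1}^M W_m)\mathbf{1}$, $\mathbf{1} \in \mathbb{R}^M$ is the all-ones vector, and $\|\cdot\|$ is the Euclidean norm. -/

import Mathlib

/-- The all-ones vector in `EuclideanSpace ℝ (Fin M)`. -/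
noncomputable def onesVec (M : ℕ) : EuclideanSpace ℝ (Fin M) :=
  (WithLp.equiv 2 (Fin M → ℝ)).symm (fun _ => 1)

/-- Key state-space-collapse inequality: if every component of `lam` is at least `δ`
and `m₀` is a coordinate achieving `min_m W m`, then
`(min_m W m)(∑ lam m) - ⟨lam, W⟩ ≤ -δ ‖W⊥‖` where `W⊥ = W - (W_Σ/M)𝟏`. -/
theorem stmt_7 (M : ℕ) (hM : 1 ≤ M) (δ : ℝ) (hδ : 0 < δ)
    (W lam : EuclideanSpace ℝ (Fin M)) (hlam : ∀ m, δ ≤ lam m)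
    (m₀ : Fin M) (hm₀ : ∀ m, W m₀ ≤ W m) :
    W m₀ * (∑ m, lam m) - (∑ m, lam m * W m)
      ≤ -δ * ‖W - ((∑ m, W m) / (M : ℝ)) • onesVec M‖ := by
  have hM' : (1:ℝ) ≤ (M:ℝ) := by exact_mod_cast hM
  set c : ℝ := W m₀ with hc
  set T : ℝ := ∑ m, W m with hT
  set S : ℝ := ∑ m, (W m - c) with hS
  have hx : ∀ m : Fin M, 0 ≤ W m - c := fun m => sub_nonneg.mpr (hm₀ m)
  have hS0 : 0 ≤ S := Finset.sum_nonneg fun m _ => hx m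
  have hcomp : ∀ m : Fin M, (W - (T / (M:ℝ)) • onesVec M) m = W m - T / (M:ℝ) := by
    intro m
    simp [onesVec, WithLp.equiv_symm_apply, PiLp.toLp_apply]
  -- expand squared sums
  have hexp : ∀ a : ℝ, ∑ m, (W m - a)^2 = (∑ m, (W m)^2) - 2*a*T + (M:ℝ)*a^2 := by
    intro a
    calc ∑ m, (W m - a)^2 = ∑ m, ((W m)^2 - 2*a*(W m) + a^2) := by
          exact Finset.sum_congr rfl fun m _ => by ring
      _ = (∑ m, (W m)^2) - 2*a*T + (M:ℝ)*a^2 := by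
          rw [Finset.sum_add_distrib, Finset.sum_sub_distrib, ← Finset.mul_sum,
            Finset.sum_const, Finset.card_fin, nsmul_eq_mul, ← hT]
  have h1 : ∑ m, (W m - T/(M:ℝ))^2 ≤ ∑ m, (W m - c)^2 := by
    rw [hexp, hexp]
    have hMpos : (0:ℝ) < (M:ℝ) := by linarith
    have key : 0 ≤ ((M:ℝ)*c - T)^2 / (M:ℝ) := div_nonneg (sq_nonneg _) hMpos.le
    have : ((M:ℝ)*c - T)^2 / (M:ℝ) = (M:ℝ)*c^2 - 2*c*T + T^2/(M:ℝ) := by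
      field_simp; ring
    have e1 : (M:ℝ)*(T/(M:ℝ))^2 = T^2/(M:ℝ) := by field_simp
    have e2 : 2*(T/(M:ℝ))*T = 2*(T^2/(M:ℝ)) := by field_simp
    linarith [key, this, e1, e2]
  have h2 : ∑ m, (W m - c)^2 ≤ S^2 := by
    rw [hS]
    exact Finset.sum_sq_le_sq_sum_of_nonneg fun m _ => hx m
  have hnorm : ‖W - (T / (M:ℝ)) • onesVec M‖ ≤ S := by
    rw [EuclideanSpace.norm_eq]
    have : ∀ m : Fin M, ‖(W - (T / (M:ℝ)) • onesVec M) m‖^2 = (W m - T/(M:ℝ))^2 := by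
      intro m; rw [hcomp m, Real.norm_eq_abs, sq_abs]
    calc Real.sqrt (∑ m, ‖(W - (T / (M:ℝ)) • onesVec M) m‖^2)
        = Real.sqrt (∑ m, (W m - T/(M:ℝ))^2) := by simp_rw [this]
      _ ≤ Real.sqrt (S^2) := Real.sqrt_le_sqrt (le_trans h1 h2)
      _ = S := by rw [Real.sqrt_sq hS0]
  have hmain : c * (∑ m, lam m) - (∑ m, lam m * W m) ≤ -δ * S := by
    have : c * (∑ m, lam m) - (∑ m, lam m * W m) = -∑ m, lam m * (W m - c) := by
      rw [← Finset.sum_neg_distrib, Finset.mul_sum, ← Finset.sum_sub_distrib]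
      congr 1; ext m; ring
    rw [this, neg_mul, neg_le_neg_iff]
    rw [Finset.mul_sum]
    exact Finset.sum_le_sum fun m _ =>
      mul_le_mul_of_nonneg_right (hlam m) (hx m) |>.trans_eq' rfl
  calc c * (∑ m, lam m) - (∑ m, lam m * W m) ≤ -δ * S := hmain
    _ ≤ -δ * ‖W - (T / (M:ℝ)) • onesVec M‖ := by
        have := mul_le_mul_of_nonneg_left hnorm hδ.le
        linarith
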